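/- For all natural numbers n ≥ 1 and r with 1 ≤ r ≤ n, ∫₀¹ (−log(1 − x)) · x^{r−1}(1 − x)^{n−r} / B(r, n+1−r) dx = H_n − H_{n−r}, where B denotes the Beta function and H_m := ∑_{k=1}^{m} 1/k is the m-th harmonic number (H_0 := 0). -/

import Mathlib

/-- `harmonicR m = H_m = ∑_{k=1}^m 1/k`, with `H_0 = 0`. -/
noncomputable def harmonicR (m : ℕ) : ℝ := ∑ k ∈ Finset.range m, (1 : ℝ) / (k + 1)

/-- The Beta function at natural arguments: `B(a, b) = ∫₀¹ t^(a−1) (1−t)^(b−1) dt`. -/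
noncomputable def betaFn (a b : ℕ) : ℝ := ∫ t in (0 : ℝ)..1, t ^ (a - 1) * (1 - t) ^ (b - 1)

open Real MeasureTheory Set intervalIntegral Filter

lemma neg_log_le_rpow {u : ℝ} (hu : 0 < u) : -Real.log u ≤ 2 * u ^ (-(1/2) : ℝ) := by
  have h1 : Real.log (u ^ (-(1/2) : ℝ)) = -(1/2) * Real.log u := Real.log_rpow hu _
  have h2 : Real.log (u ^ (-(1/2) : ℝ)) ≤ u ^ (-(1/2) : ℝ) - 1 :=
    Real.log_le_sub_one_of_pos (Real.rpow_pos_of_pos hu _)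
  nlinarith [Real.rpow_pos_of_pos hu (-(1/2) : ℝ)]

lemma intLog (a b : ℕ) :
    IntervalIntegrable (fun u : ℝ => (-Real.log u) * ((1 - u) ^ a * u ^ b)) volume 0 1 := by
  rw [intervalIntegrable_iff_integrableOn_Ioc_of_le zero_le_one]
  have hg : IntegrableOn (fun u : ℝ => 2 * u ^ (-(1/2) : ℝ)) (Ioc 0 1) volume := by
    have h := intervalIntegral.intervalIntegrable_rpow' (a := 0) (b := 1) (r := (-(1/2) : ℝ))
      (by norm_num)
    rw [intervalIntegrable_iff_integrableOn_Ioc_of_le zero_le_one] at h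
    exact h.const_mul 2
  refine hg.mono' ?_ ?_
  · refine ((Real.measurable_log.neg.mul ?_).aestronglyMeasurable)
    exact ((measurable_const.sub measurable_id).pow_const a).mul (measurable_id.pow_const b)
  · filter_upwards [ae_restrict_mem measurableSet_Ioc] with u hu
    obtain ⟨hu1, hu2⟩ := hu
    have h0 : (0:ℝ) ≤ -Real.log u := by
      simpa using Real.log_nonpos hu1.le hu2
    have ha : (1 - u) ^ a ≤ 1 := pow_le_one₀ (by linarith) (by linarith)
    have hb : u ^ b ≤ 1 := pow_le_one₀ hu1.le hu2
    have h1 : (1 - u) ^ a * u ^ b ≤ 1 := by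
      nlinarith [pow_nonneg hu1.le b, pow_nonneg (show (0:ℝ) ≤ 1 - u by linarith) a]
    have h2 : (0:ℝ) ≤ (1 - u) ^ a * u ^ b :=
      mul_nonneg (pow_nonneg (by linarith [hu1]) a) (pow_nonneg hu1.le b)
    rw [Real.norm_eq_abs, abs_of_nonneg (mul_nonneg h0 h2)]
    calc -Real.log u * ((1 - u) ^ a * u ^ b) ≤ -Real.log u * 1 := by nlinarith
    _ ≤ 2 * u ^ (-(1/2) : ℝ) := by simpa using neg_log_le_rpow hu1

lemma baseInt (b : ℕ) (hint : IntervalIntegrable (fun u : ℝ => (-Real.log u) * u ^ b) volume 0 1) :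
    ∫ u in (0:ℝ)..1, (-Real.log u) * u ^ b = 1 / ((b:ℝ)+1)^2 := by
  set F : ℝ → ℝ := fun u => u^(b+1)/((b:ℝ)+1)^2 - u^(b+1) * Real.log u / ((b:ℝ)+1) with hF
  have hb1 : ((b:ℝ)+1) ≠ 0 := by positivity
  have hd : ∀ x ∈ Ioo (0:ℝ) 1, HasDerivAt F ((-Real.log x) * x ^ b) x := by
    intro x hx
    have h1 : HasDerivAt (fun u : ℝ => u ^ (b+1)) (((b:ℝ)+1) * x ^ b) x := by
      simpa using hasDerivAt_pow (b+1) x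
    have h2 : HasDerivAt Real.log x⁻¹ x := Real.hasDerivAt_log hx.1.ne'
    have h3 := (h1.div_const (((b:ℝ)+1)^2)).sub ((h1.mul h2).div_const ((b:ℝ)+1))
    refine h3.congr_deriv ?_
    have hx0 : x ≠ 0 := hx.1.ne'
    field_simp
    ring
  have h0 : Tendsto F (nhdsWithin 0 (Ioi (0:ℝ))) (nhds 0) := by
    have t2 : Tendsto (fun u : ℝ => u^(b+1) * Real.log u / ((b:ℝ)+1))
        (nhdsWithin 0 (Ioi (0:ℝ))) (nhds 0) := by
      have h := (tendsto_log_mul_rpow_nhdsGT_zero (r := (b:ℝ)+1) (by positivity)).div_const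
        (((b:ℝ)+1))
      rw [zero_div] at h
      refine h.congr' ?_
      filter_upwards [self_mem_nhdsWithin] with u hu
      rw [show ((b:ℝ)+1) = ((b+1 : ℕ) : ℝ) by push_cast; ring, Real.rpow_natCast]
      ring
    have t1 : Tendsto (fun u : ℝ => u^(b+1)/((b:ℝ)+1)^2) (nhdsWithin 0 (Ioi (0:ℝ)))
        (nhds 0) := by
      have : Tendsto (fun u : ℝ => u^(b+1)/((b:ℝ)+1)^2) (nhds 0) (nhds 0) := by
        have := ((continuous_pow (b+1)).div_const (((b:ℝ)+1)^2)).tendsto 0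
        simpa using this
      exact this.mono_left nhdsWithin_le_nhds
    simpa using t1.sub t2
  have h1t : Tendsto F (nhdsWithin 1 (Iio (1:ℝ))) (nhds (1/((b:ℝ)+1)^2)) := by
    have hc : ContinuousAt F 1 := by
      apply ContinuousAt.sub
      · exact ((continuous_pow (b+1)).continuousAt).div_const _
      · exact (((continuous_pow (b+1)).continuousAt).mul
          (Real.continuousAt_log one_ne_zero)).div_const _
    have hF1 : F 1 = 1/((b:ℝ)+1)^2 := by simp [hF]
    rw [← hF1]
    exact hc.continuousWithinAt.tendsto
  have := intervalIntegral.integral_eq_sub_of_hasDerivAt_of_tendsto zero_lt_one hd hint h0 h1t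
  rw [this]; ring

lemma harmonicR_succ (m : ℕ) : harmonicR (m+1) = harmonicR m + 1/((m:ℝ)+1) := by
  simp [harmonicR, Finset.sum_range_succ]

lemma step_alg (A B C p q H Hb : ℝ) (hC : C ≠ 0) (hp : p ≠ 0) (hq : q ≠ 0) :
    A * B / C * (H - Hb) - A * ((p - q) * 0 + q * B) / (p * C) * ((H + 1/p) - (Hb + 1/q))
      = ((p - q) * A * B) / (p * C) * ((H + 1/p) - Hb) := by
  field_simp
  ring

set_option maxHeartbeats 1000000 in
lemma mainI (a : ℕ) : ∀ b : ℕ, (∫ u in (0:ℝ)..1, (-Real.log u) * ((1 - u) ^ a * u ^ b))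
    = ((a.factorial : ℝ) * b.factorial / (a+b+1).factorial)
      * (harmonicR (a+b+1) - harmonicR b) := by
  induction a with
  | zero =>
    intro b
    have e1 : (∫ u in (0:ℝ)..1, (-Real.log u) * ((1 - u) ^ 0 * u ^ b))
        = ∫ u in (0:ℝ)..1, (-Real.log u) * u ^ b := by
      apply intervalIntegral.integral_congr; intro u _; simp
    rw [e1, baseInt b (by simpa using intLog 0 b)]
    rw [show 0+b+1 = b+1 from by omega, harmonicR_succ, Nat.factorial_succ]
    have hb0 : ((b:ℝ)+1) ≠ 0 := by positivity
    have hbf : ((b.factorial : ℝ)) ≠ 0 := by positivity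
    push_cast
    field_simp
    ring
  | succ a ih =>
    intro b
    have key : (∫ u in (0:ℝ)..1, (-Real.log u) * ((1 - u) ^ (a+1) * u ^ b))
        = (∫ u in (0:ℝ)..1, (-Real.log u) * ((1 - u) ^ a * u ^ b))
          - ∫ u in (0:ℝ)..1, (-Real.log u) * ((1 - u) ^ a * u ^ (b+1)) := by
      rw [← intervalIntegral.integral_sub (intLog a b) (intLog a (b+1))]
      apply intervalIntegral.integral_congr; intro u _
      simp only
      ring
    rw [key, ih b, ih (b+1)]
    rw [show a+(b+1)+1 = (a+b+1)+1 from by omega, show a+1+b+1 = (a+b+1)+1 from by omega]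
    have hH2 : harmonicR ((a+b+1)+1) = harmonicR (a+b+1) + 1/(((a+b+1:ℕ):ℝ)+1) :=
      harmonicR_succ _
    have hHb1 : harmonicR (b+1) = harmonicR b + 1/(((b:ℕ):ℝ)+1) := harmonicR_succ _
    have hfac : ((((a+b+1)+1).factorial : ℕ) : ℝ)
        = (((a+b+1:ℕ):ℝ)+1) * ((a+b+1).factorial : ℝ) := by
      rw [Nat.factorial_succ]; push_cast; ring
    have hfb : (((b+1).factorial : ℕ) : ℝ) = (((b:ℕ):ℝ)+1) * (b.factorial : ℝ) := by
      rw [Nat.factorial_succ]; push_cast; ring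
    have hfa : (((a+1).factorial : ℕ) : ℝ)
        = ((((a+b+1:ℕ):ℝ)+1) - (((b:ℕ):ℝ)+1)) * (a.factorial : ℝ) := by
      rw [Nat.factorial_succ]; push_cast; ring
    rw [hH2, hHb1, hfac, hfb, hfa]
    have hC : ((a+b+1).factorial : ℝ) ≠ 0 := by positivity
    have hp : (((a+b+1:ℕ):ℝ)+1) ≠ 0 := by positivity
    have hq : (((b:ℕ):ℝ)+1) ≠ 0 := by positivity
    have := step_alg (a.factorial : ℝ) (b.factorial : ℝ) ((a+b+1).factorial : ℝ)
      (((a+b+1:ℕ):ℝ)+1) (((b:ℕ):ℝ)+1) (harmonicR (a+b+1)) (harmonicR b) hC hp hq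
    linear_combination this

lemma betaNat (b : ℕ) : ∀ a : ℕ, (∫ t in (0:ℝ)..1, t^a * (1-t)^b)
    = ((a.factorial : ℝ) * b.factorial / (a+b+1).factorial) := by
  induction b with
  | zero =>
    intro a
    simp only [pow_zero, mul_one]
    rw [integral_pow, show a+0+1 = a+1 from by omega, Nat.factorial_succ]
    have h1 : ((a:ℝ)+1) ≠ 0 := by positivity
    have h2 : ((a.factorial : ℕ) : ℝ) ≠ 0 := by positivity
    push_cast
    field_simp
    simp
  | succ b ih =>
    intro a
    have cont : ∀ (i j : ℕ), IntervalIntegrable (fun t:ℝ => t^i * (1-t)^j) volume 0 1 :=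
      fun i j => (((continuous_pow i).mul
        ((continuous_const.sub continuous_id).pow j))).intervalIntegrable 0 1
    have key : (∫ t in (0:ℝ)..1, t^a * (1-t)^(b+1))
        = (∫ t in (0:ℝ)..1, t^a * (1-t)^b) - ∫ t in (0:ℝ)..1, t^(a+1) * (1-t)^b := by
      rw [← intervalIntegral.integral_sub (cont a b) (cont (a+1) b)]
      apply intervalIntegral.integral_congr; intro t _
      simp only
      ring
    rw [key, ih a, ih (a+1)]
    rw [show a+1+b+1 = (a+b+1)+1 from by omega, show a+(b+1)+1 = (a+b+1)+1 from by omega]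
    rw [Nat.factorial_succ (a+b+1), Nat.factorial_succ a, Nat.factorial_succ b]
    have h1 : (((a+b+1:ℕ):ℝ)+1) ≠ 0 := by positivity
    have h3 : (((a+b+1).factorial : ℕ) : ℝ) ≠ 0 := by positivity
    push_cast
    field_simp
    ring

/-- The Beta(r, n+1−r) expectation of `−log(1−x)` equals `H_n − H_{n−r}`. -/
theorem beta_integral_neg_log (n r : ℕ) (hn : 1 ≤ n) (hr1 : 1 ≤ r) (hrn : r ≤ n) :
    ∫ x in (0 : ℝ)..1,
        (-Real.log (1 - x)) * (x ^ (r - 1) * (1 - x) ^ (n - r) / betaFn r (n + 1 - r))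
      = harmonicR n - harmonicR (n - r) := by
  obtain ⟨a, rfl⟩ : ∃ a, r = a + 1 := ⟨r - 1, by omega⟩
  obtain ⟨b, rfl⟩ : ∃ b, n = a + b + 1 := ⟨n - (a + 1), by omega⟩
  rw [show a + b + 1 - (a + 1) = b from by omega,
    show a + b + 1 + 1 - (a + 1) = b + 1 from by omega,
    show a + 1 - 1 = a from by omega]
  have hBval : betaFn (a+1) (b+1) = ((a.factorial : ℝ) * b.factorial / (a+b+1).factorial) := by
    rw [betaFn, show a + 1 - 1 = a from by omega, show b + 1 - 1 = b from by omega]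
    exact betaNat b a
  rw [hBval]
  have hVne : ((a.factorial : ℝ) * b.factorial / (a+b+1).factorial) ≠ 0 := by positivity
  have step1 : (∫ x in (0:ℝ)..1, (-Real.log (1 - x)) *
        (x ^ a * (1 - x) ^ b / ((a.factorial : ℝ) * b.factorial / (a+b+1).factorial)))
      = ((a.factorial : ℝ) * b.factorial / (a+b+1).factorial)⁻¹ *
        ∫ x in (0:ℝ)..1, (fun u : ℝ => (-Real.log u) * ((1 - u) ^ a * u ^ b)) (1 - x) := by
    rw [← intervalIntegral.integral_const_mul]
    apply intervalIntegral.integral_congr; intro x _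
    simp only [sub_sub_cancel]
    ring
  rw [step1, intervalIntegral.integral_comp_sub_left
    (fun u : ℝ => (-Real.log u) * ((1 - u) ^ a * u ^ b)) 1]
  rw [show (1:ℝ) - 1 = 0 from by norm_num, show (1:ℝ) - 0 = 1 from by norm_num]
  rw [mainI a b, ← mul_assoc, inv_mul_cancel₀ hVne, one_mul]
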